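/- For all moulds M, N, P : List Ω → k, one has (M × N) ∘ P = (M ∘ P) × (N ∘ P); that is, mould composition distributes over the mould product from the left. (This identity is the comodule-bialgebra compatibility of the incidence bialgebras of the free operad Ω* and the Baez–Dolan construction Ω⊙, i.e. the main theorem specialized to a monoid Ω.) -/

import Mathlib

variable {Ω : Type*} [Monoid Ω] {k : Type*} [CommRing k]

/-- The mould product: `(M × N)(w) = ∑_{w = u ++ v} M(u) · N(v)`. -/
def mouldMul (M N : List Ω → k) : List Ω → k := fun w =>
  ∑ i ∈ Finset.range (w.length + 1), M (w.take i) * N (w.drop i)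

/-- The mould composition: `(M ∘ N)([]) = M([])` and, for `w` nonempty,
`(M ∘ N)(w) = ∑_{c : Composition |w|} (∏_b N(b)) · M(ν_c(w))`, where the product is
over the blocks `b` of `w` cut according to `c`, and `ν_c(w)` is the list of block
norms (the products in `Ω` of the entries of each block). -/
def mouldComp (M N : List Ω → k) : List Ω → k := fun w =>
  if w.length = 0 then M [] else
    ∑ c : Composition w.length,
      ((w.splitWrtComposition c).map N).prod *
        M ((w.splitWrtComposition c).map List.prod)

theorem splitWrtCompositionAux_append' {α : Type*} (ns ms : List ℕ) (l : List α) :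
    l.splitWrtCompositionAux (ns ++ ms) =
      (l.take ns.sum).splitWrtCompositionAux ns ++ (l.drop ns.sum).splitWrtCompositionAux ms := by
  induction ns generalizing l with
  | nil => simp [List.splitWrtCompositionAux]
  | cons n ns ih =>
    simp only [List.cons_append, List.splitWrtCompositionAux_cons, List.sum_cons]
    rw [ih, List.take_take, min_eq_left (Nat.le_add_right _ _), List.drop_take,
      Nat.add_sub_cancel_left, List.drop_drop]

/-- Cast a composition along an equality of the total. -/
def compCast {m n : ℕ} (h : m = n) (c : Composition m) : Composition n :=
  ⟨c.blocks, c.blocks_pos, c.blocks_sum.trans h⟩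

@[simp] lemma compCast_blocks {m n : ℕ} (h : m = n) (c : Composition m) :
    (compCast h c).blocks = c.blocks := rfl

def compTake {n : ℕ} (c : Composition n) (j : ℕ) : Composition (c.blocks.take j).sum :=
  ⟨c.blocks.take j, fun hm => c.blocks_pos (List.take_subset _ _ hm), rfl⟩

def compDrop {n : ℕ} (c : Composition n) (j : ℕ) : Composition (n - (c.blocks.take j).sum) :=
  ⟨c.blocks.drop j, fun hm => c.blocks_pos (List.drop_subset _ _ hm), by
    have h1 := c.blocks_sum
    have h2 : (c.blocks.take j).sum + (c.blocks.drop j).sum = c.blocks.sum := by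
      rw [← List.sum_append, List.take_append_drop]
    omega⟩

def compAppend {a b : ℕ} (c₁ : Composition a) (c₂ : Composition b) : Composition (a + b) :=
  ⟨c₁.blocks ++ c₂.blocks, fun hm => by
    rcases List.mem_append.mp hm with h | h
    · exact c₁.blocks_pos h
    · exact c₂.blocks_pos h,
   by rw [List.sum_append, c₁.blocks_sum, c₂.blocks_sum]⟩

lemma comp_take_sum_le {n : ℕ} (c : Composition n) (j : ℕ) : (c.blocks.take j).sum ≤ n := by
  conv_rhs => rw [← c.blocks_sum, ← List.take_append_drop j c.blocks]
  rw [List.sum_append]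
  exact Nat.le_add_right _ _

set_option linter.unusedSectionVars false in
lemma comp_blocks_nil {w : List Ω} (h : w.length = 0) (c : Composition w.length) :
    c.blocks = [] := by
  cases hb : c.blocks with
  | nil => rfl
  | cons b bs =>
    have hpos := c.blocks_pos (hb ▸ (show b ∈ b :: bs from List.mem_cons_self))
    have hsum := c.blocks_sum
    rw [hb, h] at hsum
    simp at hsum
    omega

lemma mouldComp_eq (M P : List Ω → k) (w : List Ω) :
    mouldComp M P w = ∑ c : Composition w.length,
      ((w.splitWrtComposition c).map P).prod * M ((w.splitWrtComposition c).map List.prod) := by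
  rw [mouldComp]
  split_ifs with h
  · have hw : w = [] := List.length_eq_zero_iff.mp h
    subst hw
    rw [Fintype.sum_eq_single (⟨[], by simp, rfl⟩ : Composition ([] : List Ω).length)
      (fun b hb => absurd (Composition.ext ((comp_blocks_nil (w := ([] : List Ω)) rfl b).trans rfl)) hb)]
    simp [List.splitWrtComposition, List.splitWrtCompositionAux]
  · rfl

lemma take_len (w : List Ω) (c : Composition w.length) (j : ℕ) :
    (w.take (c.blocks.take j).sum).length = (c.blocks.take j).sum := by
  rw [List.length_take]
  exact min_eq_left (comp_take_sum_le c j)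

lemma sigma_comp_pair_ext {f g : ℕ → ℕ} {x y : Σ i : ℕ, Composition (f i) × Composition (g i)}
    (h1 : x.1 = y.1) (h2 : x.2.1.blocks = y.2.1.blocks) (h3 : x.2.2.blocks = y.2.2.blocks) :
    x = y := by
  obtain ⟨i, a, b⟩ := x
  obtain ⟨j, a', b'⟩ := y
  dsimp at h1
  subst h1
  dsimp at h2 h3
  have ha : a = a' := Composition.ext h2
  have hb : b = b' := Composition.ext h3
  rw [ha, hb]


/-- Mould composition distributes over the mould product from the left:
`(M × N) ∘ P = (M ∘ P) × (N ∘ P)`.  This is the comodule-bialgebra compatibility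
of the incidence bialgebras of the free operad `Ω*` and the Baez–Dolan
construction `Ω⊙`. -/
theorem mouldComp_mouldMul_distrib (M N P : List Ω → k) :
    mouldComp (mouldMul M N) P = mouldMul (mouldComp M P) (mouldComp N P) := by
  funext w
  rw [mouldComp_eq]
  simp only [mouldMul, mouldComp_eq, List.length_map, List.length_splitWrtComposition]
  simp only [Finset.mul_sum, Finset.sum_mul]
  simp only [← Finset.sum_product', Finset.univ_product_univ]
  rw [Finset.sum_sigma', Finset.sum_sigma']
  refine Finset.sum_bij'
    (fun x _ => ⟨(x.1.blocks.take x.2).sum,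
      (compCast (by rw [List.length_drop]) (compDrop x.1 x.2),
       compCast (take_len w x.1 x.2).symm (compTake x.1 x.2))⟩)
    (fun y _ => ⟨compCast (by rw [← List.length_append, List.take_append_drop])
        (compAppend y.2.2 y.2.1), y.2.2.length⟩)
    ?_ ?_ ?_ ?_ ?_
  · -- forward map lands in target
    rintro ⟨c, j⟩ _
    simp only [Finset.mem_sigma, Finset.mem_range, Finset.mem_univ, and_true]
    exact Nat.lt_succ_of_le (comp_take_sum_le c j)
  · -- backward map lands in source
    rintro ⟨i, c2, c1⟩ _
    simp only [Finset.mem_sigma, Finset.mem_univ, Finset.mem_range, true_and]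
    have h1 : (compCast (show (w.take i).length + (w.drop i).length = w.length by
        rw [← List.length_append, List.take_append_drop]) (compAppend c1 c2)).length
        = c1.blocks.length + c2.blocks.length := by
      show (c1.blocks ++ c2.blocks).length = _
      rw [List.length_append]
    have h2 : c1.length = c1.blocks.length := rfl
    omega
  · -- left inverse
    rintro ⟨c, j⟩ ha
    simp only [Finset.mem_sigma, Finset.mem_univ, Finset.mem_range, true_and] at ha
    have hj : j ≤ c.blocks.length := by rw [Composition.blocks_length]; omega
    have h1 : compCast (show (w.take ((c.blocks.take j).sum)).length +
          (w.drop ((c.blocks.take j).sum)).length = w.length by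
        rw [← List.length_append, List.take_append_drop])
        (compAppend (compCast (take_len w c j).symm (compTake c j))
          (compCast (by rw [List.length_drop]) (compDrop c j))) = c := by
      ext1
      show c.blocks.take j ++ c.blocks.drop j = c.blocks
      exact List.take_append_drop j c.blocks
    have h2 : (compCast (take_len w c j).symm (compTake c j)).length = j := by
      show (c.blocks.take j).length = j
      rw [List.length_take]
      omega
    exact Sigma.ext h1 (heq_of_eq h2)
  · -- right inverse
    rintro ⟨i, c2, c1⟩ hb
    simp only [Finset.mem_sigma, Finset.mem_range, Finset.mem_univ, and_true] at hb
    have hin : i ≤ w.length := Nat.lt_succ_iff.mp hb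
    have htake : (c1.blocks ++ c2.blocks).take c1.length = c1.blocks := by
      show (c1.blocks ++ c2.blocks).take c1.blocks.length = c1.blocks
      exact List.take_left
    have hdrop : (c1.blocks ++ c2.blocks).drop c1.length = c2.blocks := by
      show (c1.blocks ++ c2.blocks).drop c1.blocks.length = c2.blocks
      exact List.drop_left
    refine sigma_comp_pair_ext (f := fun i => (w.drop i).length) (g := fun i => (w.take i).length)
      ?_ ?_ ?_
    · show (((compAppend c1 c2).blocks).take c1.length).sum = i
      show ((c1.blocks ++ c2.blocks).take c1.length).sum = i
      rw [htake, c1.blocks_sum, List.length_take]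
      omega
    · show ((compAppend c1 c2).blocks).drop c1.length = c2.blocks
      exact hdrop
    · show ((compAppend c1 c2).blocks).take c1.length = c1.blocks
      exact htake
  · -- values agree
    rintro ⟨c, j⟩ ha
    simp only [Finset.mem_sigma, Finset.mem_univ, Finset.mem_range, true_and] at ha
    have hj : j ≤ c.blocks.length := by rw [Composition.blocks_length]; omega
    dsimp only
    have key : w.splitWrtComposition c =
        (w.take (c.blocks.take j).sum).splitWrtComposition
          (compCast (take_len w c j).symm (compTake c j)) ++
        (w.drop (c.blocks.take j).sum).splitWrtComposition
          (compCast (show w.length - (c.blocks.take j).sum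
              = (w.drop (c.blocks.take j).sum).length by rw [List.length_drop])
            (compDrop c j)) := by
      show List.splitWrtCompositionAux w c.blocks = _
      conv_lhs => rw [← List.take_append_drop j c.blocks]
      exact splitWrtCompositionAux_append' _ _ _
    have hlen : ((w.take (c.blocks.take j).sum).splitWrtComposition
        (compCast (take_len w c j).symm (compTake c j))).length = j := by
      rw [List.length_splitWrtComposition]
      show (c.blocks.take j).length = j
      rw [List.length_take]
      omega
    rw [key, List.map_append, List.map_append, List.prod_append,
      List.take_left' (by rw [List.length_map, hlen]),
      List.drop_left' (by rw [List.length_map, hlen])]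
    ring
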